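/- A connected vertex-transitive graph of valency r is at least ⌈2r/3⌉-vertex-connected. -/

import Mathlib

open SimpleGraph

/-- A graph `G` is `k`-connected if it has more than `k` vertices and remains
connected after deleting any set of fewer than `k` vertices. -/
def IsKVertexConnected {V : Type*} [Fintype V] (G : SimpleGraph V) (k : ℕ) : Prop :=
  k < Fintype.card V ∧
    ∀ S : Finset V, S.card < k →
      ((⊤ : G.Subgraph).deleteVerts (S : Set V)).coe.Connected

/-- A graph is vertex-transitive if its automorphism group acts transitively on vertices. -/
def IsVertexTransitive {V : Type*} (G : SimpleGraph V) : Prop :=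
  ∀ u v : V, ∃ γ : G ≃g G, γ u = v

set_option linter.unusedSectionVars false

namespace VTAux
open Finset

variable {V : Type*} [Fintype V] [DecidableEq V] (G : SimpleGraph V) [DecidableRel G.Adj]

/-- Outer neighborhood of a finset of vertices. -/
def nbhd (C : Finset V) : Finset V :=
  Finset.univ.filter (fun v => v ∉ C ∧ ∃ u ∈ C, G.Adj u v)

/-- The rest: everything outside `C ∪ nbhd C`. -/
def rest (C : Finset V) : Finset V := (C ∪ nbhd G C)ᶜ

def IsPiece (C : Finset V) : Prop := C.Nonempty ∧ (rest G C).Nonempty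

noncomputable def kappa : ℕ := sInf {m | ∃ C, IsPiece G C ∧ (nbhd G C).card = m}

def IsFrag (C : Finset V) : Prop := IsPiece G C ∧ (nbhd G C).card = kappa G

noncomputable def asize : ℕ := sInf {m | ∃ C, IsFrag G C ∧ C.card = m}

def IsAtom (C : Finset V) : Prop := IsFrag G C ∧ C.card = asize G

variable {G}

lemma mem_nbhd {C : Finset V} {v : V} :
    v ∈ nbhd G C ↔ v ∉ C ∧ ∃ u ∈ C, G.Adj u v := by
  simp [nbhd]

lemma mem_rest {C : Finset V} {v : V} :
    v ∈ rest G C ↔ v ∉ C ∧ v ∉ nbhd G C := by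
  simp [rest, not_or]

lemma disj_nbhd (C : Finset V) : Disjoint C (nbhd G C) := by
  rw [Finset.disjoint_left]; intro v hv hv'
  exact (mem_nbhd.1 hv').1 hv

lemma disj_rest (C : Finset V) : Disjoint C (rest G C) := by
  rw [Finset.disjoint_left]; intro v hv hv'
  exact (mem_rest.1 hv').1 hv

lemma disj_nbhd_rest (C : Finset V) : Disjoint (nbhd G C) (rest G C) := by
  rw [Finset.disjoint_left]; intro v hv hv'
  exact (mem_rest.1 hv').2 hv

lemma mem_three {C : Finset V} (v : V) : v ∈ C ∨ v ∈ nbhd G C ∨ v ∈ rest G C := by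
  by_cases h1 : v ∈ C
  · exact Or.inl h1
  by_cases h2 : v ∈ nbhd G C
  · exact Or.inr (Or.inl h2)
  exact Or.inr (Or.inr (mem_rest.2 ⟨h1, h2⟩))

lemma mem_of_adj {C : Finset V} {u v : V} (hu : u ∈ C) (h : G.Adj u v) :
    v ∈ C ∪ nbhd G C := by
  by_cases hv : v ∈ C
  · exact Finset.mem_union_left _ hv
  · exact Finset.mem_union_right _ (mem_nbhd.2 ⟨hv, u, hu, h⟩)

lemma not_adj_rest {C : Finset V} {u v : V} (hu : u ∈ C) (hv : v ∈ rest G C) :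
    ¬ G.Adj u v := by
  intro h
  rcases Finset.mem_union.1 (mem_of_adj hu h) with h' | h'
  · exact (mem_rest.1 hv).1 h'
  · exact (mem_rest.1 hv).2 h'

/-- splitting a finset's card along a three-part partition of the universe -/
lemma card_three_split (T C : Finset V) :
    T.card = (T ∩ C).card + (T ∩ nbhd G C).card + (T ∩ rest G C).card := by
  have h1 : T = (T ∩ C) ∪ ((T ∩ nbhd G C) ∪ (T ∩ rest G C)) := by
    ext v
    simp only [Finset.mem_union, Finset.mem_inter]
    constructor
    · intro hv
      rcases mem_three (G := G) (C := C) v with h | h | h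
      · exact Or.inl ⟨hv, h⟩
      · exact Or.inr (Or.inl ⟨hv, h⟩)
      · exact Or.inr (Or.inr ⟨hv, h⟩)
    · rintro (⟨h, _⟩ | ⟨h, _⟩ | ⟨h, _⟩) <;> exact h
  have d1 : Disjoint (T ∩ nbhd G C) (T ∩ rest G C) :=
    (disj_nbhd_rest C).mono (Finset.inter_subset_right) (Finset.inter_subset_right)
  have d2 : Disjoint (T ∩ C) ((T ∩ nbhd G C) ∪ (T ∩ rest G C)) := by
    rw [Finset.disjoint_union_right]
    exact ⟨(disj_nbhd C).mono Finset.inter_subset_right Finset.inter_subset_right,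
      (disj_rest C).mono Finset.inter_subset_right Finset.inter_subset_right⟩
  conv_lhs => rw [h1]
  rw [Finset.card_union_of_disjoint d2, Finset.card_union_of_disjoint d1]
  ring


open Finset

variable {V : Type*} [Fintype V] [DecidableEq V] {G : SimpleGraph V} [DecidableRel G.Adj]

lemma kappa_le {C : Finset V} (hC : IsPiece G C) : kappa G ≤ (nbhd G C).card :=
  Nat.sInf_le ⟨C, hC, rfl⟩

lemma nbhd_rest_subset (C : Finset V) : nbhd G (rest G C) ⊆ nbhd G C := by
  intro v hv
  obtain ⟨hv1, u, hu, hadj⟩ := mem_nbhd.1 hv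
  have hvC : v ∉ C := fun h => not_adj_rest h hu hadj.symm
  rcases mem_three (G := G) (C := C) v with h | h | h
  · exact absurd h hvC
  · exact h
  · exact absurd h hv1

lemma subset_rest_rest (C : Finset V) : C ⊆ rest G (rest G C) := by
  intro u hu
  refine mem_rest.2 ⟨fun h => (disj_rest C).forall_ne_finset hu h rfl, fun h => ?_⟩
  obtain ⟨_, w, hw, hadj⟩ := mem_nbhd.1 h
  exact not_adj_rest hu hw hadj.symm

lemma piece_rest {C : Finset V} (hC : IsPiece G C) : IsPiece G (rest G C) :=
  ⟨hC.2, hC.1.mono (subset_rest_rest C)⟩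

lemma frag_rest {C : Finset V} (hC : IsFrag G C) :
    IsFrag G (rest G C) ∧ nbhd G (rest G C) = nbhd G C := by
  have hp := piece_rest hC.1
  have hle : kappa G ≤ (nbhd G (rest G C)).card := kappa_le hp
  have hsub := nbhd_rest_subset (G := G) C
  have hcard : (nbhd G (rest G C)).card ≤ (nbhd G C).card := Finset.card_le_card hsub
  have hk : (nbhd G C).card = kappa G := hC.2
  have heq : nbhd G (rest G C) = nbhd G C := by
    apply Finset.eq_of_subset_of_card_le hsub
    omega
  exact ⟨⟨hp, by omega⟩, heq⟩

lemma rest_rest {C : Finset V} (hC : IsFrag G C) : rest G (rest G C) = C := by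
  apply Finset.Subset.antisymm _ (subset_rest_rest C)
  intro v hv
  have h := mem_rest.1 hv
  rw [(frag_rest hC).2] at h
  rcases mem_three (G := G) (C := C) v with h' | h' | h'
  · exact h'
  · exact absurd h' h.2
  · exact absurd h' h.1

lemma exists_frag (hP : ∃ C, IsPiece G C) : ∃ A, IsFrag G A := by
  obtain ⟨C, hC⟩ := hP
  have hne : {m | ∃ C, IsPiece G C ∧ (nbhd G C).card = m}.Nonempty := ⟨_, C, hC, rfl⟩
  obtain ⟨A, hA, hAc⟩ := Nat.sInf_mem hne
  exact ⟨A, hA, hAc⟩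

lemma exists_atom (hP : ∃ C, IsPiece G C) : ∃ A, IsAtom G A := by
  obtain ⟨C, hC⟩ := exists_frag hP
  have hne : {m | ∃ C, IsFrag G C ∧ C.card = m}.Nonempty := ⟨_, C, hC, rfl⟩
  obtain ⟨A, hA, hAc⟩ := Nat.sInf_mem hne
  exact ⟨A, hA, hAc⟩

lemma asize_le {C : Finset V} (hC : IsFrag G C) : asize G ≤ C.card :=
  Nat.sInf_le ⟨C, hC, rfl⟩



open Finset

variable {V : Type*} [Fintype V] [DecidableEq V] {G : SimpleGraph V} [DecidableRel G.Adj]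

lemma crossing {A F : Finset V} (hA : IsFrag G A) (hF : IsFrag G F) (hAF : (A ∩ F).Nonempty) :
    IsPiece G (A ∩ F) ∧
    (nbhd G (A ∩ F)).card ≤
      (A ∩ nbhd G F).card + (nbhd G A ∩ nbhd G F).card + (nbhd G A ∩ F).card ∧
    (nbhd G A ∩ rest G F).card ≤ (A ∩ nbhd G F).card ∧
    (rest G A ∩ nbhd G F).card ≤ (nbhd G A ∩ F).card := by
  set C := A ∩ F with hC
  have hsub : nbhd G C ⊆ (A ∩ nbhd G F) ∪ (nbhd G A ∩ nbhd G F) ∪ (nbhd G A ∩ F) := by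
    intro v hv
    obtain ⟨hvC, u, hu, hadj⟩ := mem_nbhd.1 hv
    have huA : u ∈ A := (Finset.mem_inter.1 hu).1
    have huF : u ∈ F := (Finset.mem_inter.1 hu).2
    have hvA := mem_of_adj huA hadj
    have hvF := mem_of_adj huF hadj
    simp only [Finset.mem_union, Finset.mem_inter] at *
    rcases hvA with h1 | h1 <;> rcases hvF with h2 | h2
    · exact absurd (Finset.mem_inter.2 ⟨h1, h2⟩) hvC
    · exact Or.inl (Or.inl ⟨h1, h2⟩)
    · exact Or.inr ⟨h1, h2⟩
    · exact Or.inl (Or.inr ⟨h1, h2⟩)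
  have hrest : rest G F ⊆ rest G C := by
    intro w hw
    have hw' := mem_rest.1 hw
    refine mem_rest.2 ⟨fun h => hw'.1 (Finset.mem_inter.1 h).2, fun h => ?_⟩
    have := hsub h
    simp only [Finset.mem_union, Finset.mem_inter] at this
    rcases this with (⟨_, h2⟩ | ⟨_, h2⟩) | ⟨_, h2⟩
    · exact hw'.2 h2
    · exact hw'.2 h2
    · exact hw'.1 h2
  have hpiece : IsPiece G C := ⟨hAF, hF.1.2.mono hrest⟩
  have hk : kappa G ≤ (nbhd G C).card := kappa_le hpiece
  have hcard : (nbhd G C).card ≤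
      (A ∩ nbhd G F).card + (nbhd G A ∩ nbhd G F).card + (nbhd G A ∩ F).card := by
    calc (nbhd G C).card ≤ ((A ∩ nbhd G F) ∪ (nbhd G A ∩ nbhd G F) ∪ (nbhd G A ∩ F)).card :=
          Finset.card_le_card hsub
    _ ≤ _ := le_trans (Finset.card_union_le _ _)
          (Nat.add_le_add_right (Finset.card_union_le _ _) _)
  have splitA : (nbhd G A).card =
      (nbhd G A ∩ F).card + (nbhd G A ∩ nbhd G F).card + (nbhd G A ∩ rest G F).card :=
    card_three_split _ F
  have splitF : (nbhd G F).card =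
      (A ∩ nbhd G F).card + (nbhd G A ∩ nbhd G F).card + (rest G A ∩ nbhd G F).card := by
    have := card_three_split (G := G) (nbhd G F) A
    simpa [Finset.inter_comm (nbhd G F)] using this
  have hkA : (nbhd G A).card = kappa G := hA.2
  have hkF : (nbhd G F).card = kappa G := hF.2
  exact ⟨hpiece, hcard, by omega, by omega⟩

lemma atom_sub_frag {A F : Finset V} (hA : IsAtom G A) (hF : IsFrag G F)
    (hAF : (A ∩ F).Nonempty) : A ⊆ F := by
  obtain ⟨hpiece, hcard, h1, -⟩ := crossing hA.1 hF hAF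
  have hFrest : IsFrag G (rest G F) := (frag_rest hF).1
  by_cases hcase : (rest G A ∩ rest G F).Nonempty
  · -- equality case : A ∩ F is a fragment, hence equals A
    have hArest : IsFrag G (rest G A) := (frag_rest hA.1).1
    have h2 := (crossing hArest hFrest hcase).2.2.2
    rw [rest_rest hA.1, (frag_rest hF).2, (frag_rest hA.1).2] at h2
    -- h2 : (A ∩ nbhd G F).card ≤ (nbhd G A ∩ rest G F).card
    have splitA : (nbhd G A).card =
        (nbhd G A ∩ F).card + (nbhd G A ∩ nbhd G F).card + (nbhd G A ∩ rest G F).card :=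
      card_three_split _ F
    have hkA : (nbhd G A).card = kappa G := hA.1.2
    have hk : kappa G ≤ (nbhd G (A ∩ F)).card := kappa_le hpiece
    have hfrag : IsFrag G (A ∩ F) := ⟨hpiece, by omega⟩
    have hA2 : A.card = asize G := hA.2
    have hle : asize G ≤ (A ∩ F).card := asize_le hfrag
    have heq : A ∩ F = A :=
      Finset.eq_of_subset_of_card_le (Finset.inter_subset_left) (by omega)
    rw [← heq]
    exact Finset.inter_subset_right
  · -- empty case : contradiction
    exfalso
    have hempty : rest G A ∩ rest G F = ∅ := Finset.not_nonempty_iff_eq_empty.1 hcase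
    have splitRF : (rest G F).card =
        (A ∩ rest G F).card + (nbhd G A ∩ rest G F).card + (rest G A ∩ rest G F).card := by
      have := card_three_split (G := G) (rest G F) A
      simpa [Finset.inter_comm (rest G F)] using this
    have hzero : (rest G A ∩ rest G F).card = 0 := by rw [hempty]; simp
    have splitA2 : A.card = (A ∩ F).card + (A ∩ nbhd G F).card + (A ∩ rest G F).card :=
      card_three_split _ F
    have hasize : asize G ≤ (rest G F).card := asize_le hFrest
    have hAcard : A.card = asize G := hA.2
    have hpos : 1 ≤ (A ∩ F).card := Finset.card_pos.2 hAF
    omega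

lemma atoms_eq {A B : Finset V} (hA : IsAtom G A) (hB : IsAtom G B)
    (hAB : (A ∩ B).Nonempty) : A = B := by
  have hsub := atom_sub_frag hA hB.1 hAB
  exact Finset.eq_of_subset_of_card_le hsub (by rw [hA.2, hB.2])

lemma atom_trich {B F : Finset V} (hB : IsAtom G B) (hF : IsFrag G F) :
    B ⊆ F ∨ B ⊆ nbhd G F ∨ B ⊆ rest G F := by
  by_cases h1 : (B ∩ F).Nonempty
  · exact Or.inl (atom_sub_frag hB hF h1)
  by_cases h2 : (B ∩ rest G F).Nonempty
  · exact Or.inr (Or.inr (atom_sub_frag hB (frag_rest hF).1 h2))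
  refine Or.inr (Or.inl fun v hv => ?_)
  rcases mem_three (G := G) (C := F) v with h | h | h
  · exact absurd ⟨v, Finset.mem_inter.2 ⟨hv, h⟩⟩ h1
  · exact h
  · exact absurd ⟨v, Finset.mem_inter.2 ⟨hv, h⟩⟩ h2


end VTAux

namespace VTAux
open Finset

variable {V : Type*} [Fintype V] [DecidableEq V] {G : SimpleGraph V} [DecidableRel G.Adj]

lemma mem_image_equiv {C : Finset V} (γ : G ≃g G) {v : V} :
    v ∈ C.image γ ↔ γ.symm v ∈ C := by
  simp only [Finset.mem_image]
  constructor
  · rintro ⟨w, hw, rfl⟩; simpa using hw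
  · intro h; exact ⟨γ.symm v, h, by simp⟩

lemma nbhd_image (γ : G ≃g G) (C : Finset V) :
    nbhd G (C.image γ) = (nbhd G C).image γ := by
  ext v
  constructor
  · intro h
    obtain ⟨hv, u, hu, hadj⟩ := mem_nbhd.1 h
    obtain ⟨w, hw, rfl⟩ := Finset.mem_image.1 hu
    rw [mem_image_equiv γ]
    refine mem_nbhd.2 ⟨fun hc => hv ((mem_image_equiv γ).2 hc), w, hw, ?_⟩
    have h2 := γ.symm.map_rel_iff.2 hadj
    simpa using h2
  · intro h
    rw [mem_image_equiv γ] at h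
    obtain ⟨hv, w, hw, hadj⟩ := mem_nbhd.1 h
    refine mem_nbhd.2 ⟨fun hc => hv ((mem_image_equiv γ).1 hc), γ w, Finset.mem_image_of_mem _ hw, ?_⟩
    have h2 := γ.map_rel_iff.2 hadj
    simpa using h2

lemma rest_image (γ : G ≃g G) (C : Finset V) :
    rest G (C.image γ) = (rest G C).image γ := by
  ext v
  rw [mem_image_equiv γ, mem_rest, mem_rest, mem_image_equiv γ, nbhd_image, mem_image_equiv γ]

lemma piece_image (γ : G ≃g G) {C : Finset V} (hC : IsPiece G C) : IsPiece G (C.image γ) := by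
  refine ⟨hC.1.image _, ?_⟩
  rw [rest_image]
  exact hC.2.image _

lemma atom_image (γ : G ≃g G) {C : Finset V} (hC : IsAtom G C) : IsAtom G (C.image γ) := by
  have hinj : Function.Injective (γ : V → V) := γ.toEquiv.injective
  refine ⟨⟨piece_image γ hC.1.1, ?_⟩, ?_⟩
  · rw [nbhd_image, Finset.card_image_of_injective _ hinj]
    exact hC.1.2
  · rw [Finset.card_image_of_injective _ hinj]
    exact hC.2

lemma exists_atom_mem (htrans : IsVertexTransitive G) (hP : ∃ C, IsPiece G C) (v : V) :
    ∃ A, IsAtom G A ∧ v ∈ A := by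
  obtain ⟨A, hA⟩ := exists_atom hP
  obtain ⟨a0, ha0⟩ := hA.1.1.1
  obtain ⟨γ, hγ⟩ := htrans a0 v
  exact ⟨A.image γ, atom_image γ hA, by rw [← hγ]; exact Finset.mem_image_of_mem _ ha0⟩

lemma frag_deg {r : ℕ} {A : Finset V} (hA : IsFrag G A) (hreg : G.IsRegularOfDegree r) :
    r + 1 ≤ A.card + kappa G := by
  obtain ⟨v, hv⟩ := hA.1.1
  have hsub : G.neighborFinset v ⊆ (A ∪ nbhd G A).erase v := by
    intro w hw
    have hadj : G.Adj v w := (G.mem_neighborFinset v w).1 hw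
    exact Finset.mem_erase.2 ⟨fun h => G.irrefl (h ▸ hadj), mem_of_adj hv hadj⟩
  have h1 : r ≤ ((A ∪ nbhd G A).erase v).card := by
    rw [← hreg v, ← G.card_neighborFinset_eq_degree]
    exact Finset.card_le_card hsub
  have h2 : ((A ∪ nbhd G A).erase v).card = (A ∪ nbhd G A).card - 1 :=
    Finset.card_erase_of_mem (Finset.mem_union_left _ hv)
  have h3 : (A ∪ nbhd G A).card = A.card + (nbhd G A).card :=
    Finset.card_union_of_disjoint (disj_nbhd A)
  have h4 : 1 ≤ A.card := Finset.card_pos.2 ⟨v, hv⟩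
  have h5 : (nbhd G A).card = kappa G := hA.2
  omega

lemma nbhd_nonempty (hconn : G.Connected) {C : Finset V} (hC : IsPiece G C) :
    (nbhd G C).Nonempty := by
  by_contra hne
  have hempty : nbhd G C = ∅ := Finset.not_nonempty_iff_eq_empty.1 hne
  have key : ∀ {u w : V} (_ : G.Walk u w), u ∈ C → w ∈ C := by
    intro u w p
    induction p with
    | nil => exact id
    | cons hadj p ih =>
        intro hu
        apply ih
        rcases Finset.mem_union.1 (mem_of_adj hu hadj) with h | h
        · exact h
        · rw [hempty] at h; simp at h
  obtain ⟨c, hc⟩ := hC.1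
  obtain ⟨c', hc'⟩ := hC.2
  have := (hconn c c').elim fun p => key p hc
  exact (mem_rest.1 hc').1 this

lemma two_atoms (hconn : G.Connected) (htrans : IsVertexTransitive G)
    (hP : ∃ C, IsPiece G C) {A : Finset V} (hA : IsAtom G A) :
    2 * A.card ≤ kappa G := by
  have hAfrag : IsFrag G A := hA.1
  obtain ⟨v, hv⟩ := nbhd_nonempty hconn hAfrag.1
  obtain ⟨B, hB, hvB⟩ := exists_atom_mem htrans hP v
  have hBfrag : IsFrag G B := hB.1
  have hBS : B ⊆ nbhd G A := by
    rcases atom_trich hB hAfrag with h | h | h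
    · exact absurd (h hvB) (mem_nbhd.1 hv).1
    · exact h
    · exact absurd hv (mem_rest.1 (h hvB)).2
  by_cases hfull : nbhd G A ⊆ B
  · have hSB : nbhd G A = B := Finset.Subset.antisymm hfull hBS
    obtain ⟨u, hu, hadj⟩ := (mem_nbhd.1 hv).2
    have huB : u ∉ B := fun h => (disj_nbhd A).forall_ne_finset hu (hSB ▸ h) rfl
    have hunB : u ∈ nbhd G B := mem_nbhd.2 ⟨huB, v, hvB, hadj.symm⟩
    have hAnB : A ⊆ nbhd G B := by
      rcases atom_trich hA hBfrag with h | h | h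
      · exact absurd (h hu) huB
      · exact h
      · exact absurd hunB (mem_rest.1 (h hu)).2
    -- now the complement side
    have hA'piece : IsPiece G (rest G A) := piece_rest hAfrag.1
    obtain ⟨v', hv'⟩ := nbhd_nonempty hconn hA'piece
    obtain ⟨u', hu', hadj'⟩ := (mem_nbhd.1 hv').2
    have hv'B : v' ∈ B := by
      rw [← hSB, ← (frag_rest hAfrag).2]
      exact hv'
    have hu'B : u' ∉ B := fun h =>
      (disj_nbhd_rest A).forall_ne_finset (hSB ▸ h) hu' rfl
    have hu'nB : u' ∈ nbhd G B := mem_nbhd.2 ⟨hu'B, v', hv'B, hadj'.symm⟩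
    obtain ⟨B'', hB'', hu'B''⟩ := exists_atom_mem htrans hP u'
    have hB''nB : B'' ⊆ nbhd G B := by
      rcases atom_trich hB'' hBfrag with h | h | h
      · exact absurd (h hu'B'') hu'B
      · exact h
      · exact absurd hu'nB (mem_rest.1 (h hu'B'')).2
    have hdisj : Disjoint A B'' := by
      rw [Finset.disjoint_left]
      intro x hxA hxB''
      have : A = B'' := atoms_eq hA hB'' ⟨x, Finset.mem_inter.2 ⟨hxA, hxB''⟩⟩
      exact (disj_rest A).forall_ne_finset (this ▸ hu'B'') hu' rfl
    have hcards : A.card + B''.card ≤ (nbhd G B).card := by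
      rw [← Finset.card_union_of_disjoint hdisj]
      exact Finset.card_le_card (Finset.union_subset hAnB hB''nB)
    have h1 : B''.card = asize G := hB''.2
    have h2 : A.card = asize G := hA.2
    have h3 : (nbhd G B).card = kappa G := hBfrag.2
    omega
  · obtain ⟨w, hw, hwB⟩ := Finset.not_subset.1 hfull
    obtain ⟨B₂, hB₂, hwB₂⟩ := exists_atom_mem htrans hP w
    have hB₂S : B₂ ⊆ nbhd G A := by
      rcases atom_trich hB₂ hAfrag with h | h | h
      · exact absurd (h hwB₂) (mem_nbhd.1 hw).1
      · exact h
      · exact absurd hw (mem_rest.1 (h hwB₂)).2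
    have hdisj : Disjoint B B₂ := by
      rw [Finset.disjoint_left]
      intro x hxB hxB₂
      have : B = B₂ := atoms_eq hB hB₂ ⟨x, Finset.mem_inter.2 ⟨hxB, hxB₂⟩⟩
      exact hwB (this ▸ hwB₂)
    have hcards : B.card + B₂.card ≤ (nbhd G A).card := by
      rw [← Finset.card_union_of_disjoint hdisj]
      exact Finset.card_le_card (Finset.union_subset hBS hB₂S)
    have h1 : B.card = asize G := hB.2
    have h2 : B₂.card = asize G := hB₂.2
    have h3 : A.card = asize G := hA.2
    have h4 : (nbhd G A).card = kappa G := hAfrag.2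
    omega

lemma main_bound {r : ℕ} (hconn : G.Connected) (htrans : IsVertexTransitive G)
    (hreg : G.IsRegularOfDegree r) (hP : ∃ C, IsPiece G C) :
    2 * r + 2 ≤ 3 * kappa G := by
  obtain ⟨A, hA⟩ := exists_atom hP
  have hdeg : r + 1 ≤ A.card + kappa G := frag_deg hA.1 hreg
  have h2a : 2 * A.card ≤ kappa G := two_atoms hconn htrans hP hA
  omega

end VTAux


open VTAux in
theorem vertexTransitive_connectivity {V : Type*} [Fintype V] (G : SimpleGraph V) [DecidableRel G.Adj] (r : ℕ)
    (hconn : G.Connected) (htrans : IsVertexTransitive G)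
    (hreg : G.IsRegularOfDegree r) :
    IsKVertexConnected G ((2 * r + 2) / 3) := by
  classical
  have hVne : Nonempty V := hconn.nonempty
  obtain ⟨v0⟩ := hVne
  have hner : r + 1 ≤ Fintype.card V := by
    have h1 : (G.neighborFinset v0).card = r := by
      rw [G.card_neighborFinset_eq_degree]; exact hreg v0
    have h2 : (insert v0 (G.neighborFinset v0)).card = r + 1 := by
      rw [Finset.card_insert_of_notMem (G.notMem_neighborFinset_self v0), h1]
    calc r + 1 = _ := h2.symm
    _ ≤ Fintype.card V := Finset.card_le_univ _
  have hk_lt : (2 * r + 2) / 3 < Fintype.card V := by omega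
  refine ⟨hk_lt, fun S hS => ?_⟩
  by_contra hnc
  have hSlt : S.card < Fintype.card V := lt_trans hS hk_lt
  have hcompl : (Sᶜ : Finset V).Nonempty := by
    rw [← Finset.card_pos, Finset.card_compl]; omega
  obtain ⟨y0, hy0⟩ := hcompl
  have hy0S : y0 ∉ S := Finset.mem_compl.1 hy0
  set G' := (⊤ : G.Subgraph).deleteVerts ((S : Set V)) with hG'
  have hvertsS : ∀ v : V, v ∈ G'.verts ↔ v ∉ S := by
    intro v
    simp [hG', SimpleGraph.Subgraph.deleteVerts_verts]
  have hy0v : y0 ∈ G'.verts := (hvertsS y0).2 hy0S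
  have hnept : Nonempty G'.verts := ⟨⟨y0, hy0v⟩⟩
  rw [SimpleGraph.connected_iff] at hnc
  push_neg at hnc
  have hnp : ¬ G'.coe.Preconnected := fun h => not_nonempty_iff.2 (hnc h) hnept
  rw [SimpleGraph.Preconnected] at hnp
  push_neg at hnp
  obtain ⟨x, y, hxy⟩ := hnp
  set C : Finset V :=
    Finset.univ.filter (fun v => ∃ h : v ∈ G'.verts, G'.coe.Reachable x ⟨v, h⟩) with hCdef
  have hmemC : ∀ v : V, v ∈ C ↔ ∃ h : v ∈ G'.verts, G'.coe.Reachable x ⟨v, h⟩ := by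
    intro v; simp [hCdef]
  have hxC : (x : V) ∈ C := (hmemC _).2 ⟨x.2, SimpleGraph.Reachable.refl x⟩
  have hyC : (y : V) ∉ C := by
    intro h
    obtain ⟨hv, hr⟩ := (hmemC _).1 h
    exact hxy hr
  have hnbhdS : nbhd G C ⊆ S := by
    intro w hw
    by_contra hwS
    obtain ⟨hwC, u, hu, hadj⟩ := mem_nbhd.1 hw
    obtain ⟨huv, hr⟩ := (hmemC _).1 hu
    have hwv : w ∈ G'.verts := (hvertsS w).2 hwS
    have huS : u ∉ S := (hvertsS u).1 huv
    have hadj' : G'.coe.Adj ⟨u, huv⟩ ⟨w, hwv⟩ := by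
      simp only [hG', SimpleGraph.Subgraph.coe_adj, SimpleGraph.Subgraph.deleteVerts_adj,
        SimpleGraph.Subgraph.top_adj, SimpleGraph.Subgraph.verts_top]
      exact ⟨Set.mem_univ u, huS, Set.mem_univ w, hwS, hadj⟩
    exact hwC ((hmemC _).2 ⟨hwv, hr.trans hadj'.reachable⟩)
  have hyS : (y : V) ∉ S := (hvertsS _).1 y.2
  have hpiece : IsPiece G C :=
    ⟨⟨(x : V), hxC⟩, ⟨(y : V), mem_rest.2 ⟨hyC, fun h => hyS (hnbhdS h)⟩⟩⟩
  have hkle : kappa G ≤ (nbhd G C).card := kappa_le hpiece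
  have hcard : (nbhd G C).card ≤ S.card := Finset.card_le_card hnbhdS
  have hmain := main_bound hconn htrans hreg ⟨C, hpiece⟩
  omega
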